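/- Let A be an m×m real symmetric positive semidefinite matrix with Moore–Penrose inverse A†, let α be a real scalar, and define the Newton–Raphson iterates A₀ = α A, A_{k+1} = 2 A_k − A_k A A_k. Then for every k ≥ 0 the spectral norm satisfies ‖A† − A_{k+1}‖ ≤ ‖A† − A_k‖ · ‖A A† − A A_k‖. -/

import Mathlib

open Matrix Filter

/-- The spectral norm (ℓ²-operator norm) of a real square matrix. -/
noncomputable def specNorm {m : ℕ} (M : Matrix (Fin m) (Fin m) ℝ) : ℝ :=
  ‖Matrix.toEuclideanCLM (𝕜 := ℝ) M‖

/-- `Ad` is the Moore–Penrose inverse of `A`: the Penrose equations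
`A Ad A = A`, `Ad A Ad = Ad`, `(A Ad)ᵀ = A Ad`, `(Ad A)ᵀ = Ad A`. -/
def IsMoorePenroseInv {m n : ℕ} (A : Matrix (Fin m) (Fin n) ℝ)
    (Ad : Matrix (Fin n) (Fin m) ℝ) : Prop :=
  A * Ad * A = A ∧ Ad * A * Ad = Ad ∧ (A * Ad)ᵀ = A * Ad ∧ (Ad * A)ᵀ = Ad * A

lemma specNorm_mul_le {m : ℕ} (M P : Matrix (Fin m) (Fin m) ℝ) :
    specNorm (M * P) ≤ specNorm M * specNorm P := by
  unfold specNorm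
  rw [_root_.map_mul]
  exact norm_mul_le _ _

/-- In spectral norm,
`‖Ad - N_{k+1}‖ ≤ ‖Ad - N_k‖ ⬝ ‖A Ad - A N_k‖`. -/
theorem newton_raphson_error_norm_bound {m : ℕ}
    (A Ad : Matrix (Fin m) (Fin m) ℝ)
    (hA : A.PosSemidef)
    (hMP : IsMoorePenroseInv A Ad)
    (α : ℝ) (N : ℕ → Matrix (Fin m) (Fin m) ℝ)
    (hN0 : N 0 = α • A)
    (hNrec : ∀ k, N (k + 1) = (2 : ℝ) • N k - N k * A * N k) :
    ∀ k, specNorm (Ad - N (k + 1)) ≤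
      specNorm (Ad - N k) * specNorm (A * Ad - A * N k) := by
  obtain ⟨h1, h2, h3, h4⟩ := hMP
  have hAT : Aᵀ = A := by
    have := hA.1
    exact (by simpa [Matrix.conjTranspose] using this : A.IsSymm)
  have hAAAd : A * A * Ad = A := by
    calc A * A * Ad = ((A * Ad)ᵀ * Aᵀ)ᵀ := by
          simp [transpose_mul, mul_assoc]
      _ = ((A * Ad) * A)ᵀ := by rw [h3, hAT]
      _ = A := by rw [h1, hAT]
  have hAdAA : Ad * A * A = A := by
    calc Ad * A * A = (Aᵀ * (Ad * A)ᵀ)ᵀ := by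
          simp [transpose_mul, ← mul_assoc]
      _ = (A * (Ad * A))ᵀ := by rw [h4, hAT]
      _ = A := by rw [← mul_assoc, h1, hAT]
  have key : ∀ k, N k * A * Ad = N k ∧ Ad * A * N k = N k := by
    intro k
    induction k with
    | zero =>
      constructor
      · rw [hN0, smul_mul_assoc, smul_mul_assoc, hAAAd]
      · rw [hN0, mul_smul_comm, hAdAA]
    | succ k ih =>
      obtain ⟨ih1, ih2⟩ := ih
      constructor
      · rw [hNrec, sub_mul, sub_mul, smul_mul_assoc, smul_mul_assoc, ih1,
          mul_assoc (N k * A) (N k) A, mul_assoc (N k * A) (N k * A) Ad, ih1]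
      · rw [hNrec, mul_sub, mul_smul_comm, ih2,
          ← mul_assoc (Ad * A) (N k * A) (N k), ← mul_assoc (Ad * A) (N k) A, ih2]
  intro k
  have hid : Ad - N (k + 1) = (Ad - N k) * (A * Ad - A * N k) := by
    rw [hNrec, mul_sub, sub_mul, sub_mul,
      ← mul_assoc Ad A Ad, h2, ← mul_assoc (N k) A Ad, (key k).1,
      ← mul_assoc Ad A (N k), (key k).2, ← mul_assoc (N k) A (N k), two_smul]
    abel
  rw [hid]
  exact specNorm_mul_le _ _
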